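/- There is no finite group G whose set of relative commutativity degrees D(G) = {d(H,G) : H ≤ G} has exactly two elements. -/

import Mathlib

/-- The relative commutativity degree `d(H,G)` of a subgroup `H` of a group `G`. -/
noncomputable def relCommDeg {G : Type*} [Group G] (H : Subgroup G) : ℚ :=
  (Nat.card {p : H × G // (p.1 : G) * p.2 = p.2 * (p.1 : G)} : ℚ) /
    ((Nat.card H : ℚ) * (Nat.card G : ℚ))

/-- The set `D(G)` of all relative commutativity degrees of `G`. -/
noncomputable def commDegSet (G : Type*) [Group G] : Set ℚ :=
  {q | ∃ H : Subgroup G, relCommDeg H = q}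

private lemma relCommDeg_eq_one_of {G : Type*} [Group G] [Finite G] (H : Subgroup G)
    (hc : ∀ (h : H) (g : G), (h : G) * g = g * (h : G)) : relCommDeg H = 1 := by
  have e : {p : H × G // (p.1 : G) * p.2 = p.2 * (p.1 : G)} ≃ H × G :=
    Equiv.subtypeUnivEquiv (fun p => hc p.1 p.2)
  have h1 : (0:ℚ) < (Nat.card H : ℚ) := by exact_mod_cast Nat.card_pos
  have h2 : (0:ℚ) < (Nat.card G : ℚ) := by exact_mod_cast Nat.card_pos
  rw [relCommDeg, Nat.card_congr e, Nat.card_prod]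
  push_cast
  rw [div_self (by positivity)]

private lemma card_comm_pairs {G : Type*} [Group G] [Fintype G] (H : Subgroup G) :
    Nat.card {p : H × G // (p.1 : G) * p.2 = p.2 * (p.1 : G)} =
      ∑ g : G, Nat.card ↥(H ⊓ Subgroup.centralizer {g}) := by
  classical
  have e1 : {p : H × G // (p.1 : G) * p.2 = p.2 * (p.1 : G)} ≃
      Σ g : G, ↥(H ⊓ Subgroup.centralizer {g}) :=
    { toFun := fun x => ⟨x.1.2, ⟨(x.1.1 : G), Subgroup.mem_inf.2 ⟨x.1.1.2,
        Subgroup.mem_centralizer_iff.2 (by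
          intro h hh
          rcases Set.mem_singleton_iff.1 hh with rfl
          exact x.2.symm)⟩⟩⟩
      invFun := fun y => ⟨(⟨(y.2 : G), (Subgroup.mem_inf.1 y.2.2).1⟩, y.1),
        (Subgroup.mem_centralizer_iff.1 (Subgroup.mem_inf.1 y.2.2).2 y.1 rfl).symm⟩
      left_inv := fun x => rfl
      right_inv := fun y => rfl }
  letI : ∀ g : G, Fintype ↥(H ⊓ Subgroup.centralizer {g}) := fun g => Fintype.ofFinite _
  rw [Nat.card_congr e1, Nat.card_eq_fintype_card, Fintype.card_sigma]
  simp [Nat.card_eq_fintype_card]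

private lemma card_subgroupOf_eq {G : Type*} [Group G] (H C : Subgroup G) :
    Nat.card ↥(C.subgroupOf H) = Nat.card ↥(H ⊓ C) := by
  apply Nat.card_congr
  exact
    { toFun := fun x => ⟨(x.1 : G), Subgroup.mem_inf.2 ⟨x.1.2, Subgroup.mem_subgroupOf.1 x.2⟩⟩
      invFun := fun y => ⟨⟨(y : G), (Subgroup.mem_inf.1 y.2).1⟩,
        Subgroup.mem_subgroupOf.2 (Subgroup.mem_inf.1 y.2).2⟩
      left_inv := fun x => rfl
      right_inv := fun y => rfl }

private lemma card_inf_mul {G : Type*} [Group G] [Finite G] (H C : Subgroup G) :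
    Nat.card C * Nat.card H ≤ Nat.card ↥(H ⊓ C) * Nat.card G := by
  have h1 : Nat.card ↥(C.subgroupOf H) * C.relIndex H = Nat.card H :=
    Subgroup.card_mul_index (C.subgroupOf H)
  have h2 : Nat.card C * C.index = Nat.card G := Subgroup.card_mul_index C
  have hne : C.relIndex ⊤ ≠ 0 := by
    rw [Subgroup.relIndex_top_right]
    exact Subgroup.index_ne_zero_of_finite
  have h3 : C.relIndex H ≤ C.index := by
    rw [← Subgroup.relIndex_top_right]
    exact Subgroup.relIndex_le_of_le_right le_top hne
  calc Nat.card C * Nat.card H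
      = Nat.card C * (Nat.card ↥(H ⊓ C) * C.relIndex H) := by
        rw [← card_subgroupOf_eq, h1]
    _ = Nat.card ↥(H ⊓ C) * (Nat.card C * C.relIndex H) := by ring
    _ ≤ Nat.card ↥(H ⊓ C) * (Nat.card C * C.index) := by
        exact Nat.mul_le_mul_left _ (Nat.mul_le_mul_left _ h3)
    _ = Nat.card ↥(H ⊓ C) * Nat.card G := by rw [h2]

theorem commDegSet_ncard_ne_two (G : Type*) [Group G] [Finite G] :
    (commDegSet G).ncard ≠ 2 := by
  classical
  by_cases hcomm : ∀ a b : G, a * b = b * a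
  · have hone : ∀ H : Subgroup G, relCommDeg H = 1 := fun H =>
      relCommDeg_eq_one_of H (fun h g => hcomm _ _)
    have hset : commDegSet G = {1} := by
      ext q
      simp only [commDegSet, Set.mem_setOf_eq, Set.mem_singleton_iff]
      constructor
      · rintro ⟨H, rfl⟩; exact hone H
      · rintro rfl; exact ⟨⊤, hone ⊤⟩
    rw [hset, Set.ncard_singleton]
    omega
  · push_neg at hcomm
    obtain ⟨x, y, hxy⟩ := hcomm
    set K := Subgroup.zpowers x with hK
    have hxK : x ∈ K := Subgroup.mem_zpowers x
    letI : Fintype G := Fintype.ofFinite G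
    have hGpos : 0 < Nat.card G := Nat.card_pos
    have hKpos : 0 < Nat.card K := Nat.card_pos
    have hGQ : (0:ℚ) < (Nat.card G : ℚ) := by exact_mod_cast hGpos
    have hKQ : (0:ℚ) < (Nat.card K : ℚ) := by exact_mod_cast hKpos
    -- K ≤ centralizer {x}
    have hKle : K ≤ Subgroup.centralizer {x} := by
      refine Subgroup.zpowers_le.2 (Subgroup.mem_centralizer_iff.2 ?_)
      intro h hh
      rcases Set.mem_singleton_iff.1 hh with rfl
      rfl
    have hCne : Subgroup.centralizer {x} ≠ (⊤ : Subgroup G) := by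
      intro h
      have hy : y ∈ Subgroup.centralizer ({x} : Set G) := by
        rw [h]; exact Subgroup.mem_top y
      exact hxy (Subgroup.mem_centralizer_iff.1 hy x rfl)
    have hClt : Nat.card ↥(Subgroup.centralizer ({x} : Set G)) < Nat.card G := by
      rw [← Subgroup.card_mul_index (Subgroup.centralizer ({x} : Set G))]
      exact (Nat.lt_mul_iff_one_lt_right Nat.card_pos).2
        (Subgroup.one_lt_index_of_ne_top hCne)
    -- relCommDeg K < 1
    have hb1 : relCommDeg K < 1 := by
      rw [relCommDeg, div_lt_one (by positivity)]
      have hlt : Nat.card {p : K × G // (p.1 : G) * p.2 = p.2 * (p.1 : G)} <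
          Nat.card K * Nat.card G := by
        letI : Fintype ↥K := Fintype.ofFinite _
        rw [Nat.card_eq_fintype_card, ← Nat.card_prod, Nat.card_eq_fintype_card]
        exact Fintype.card_subtype_lt (x := (⟨x, hxK⟩, y)) hxy
      exact_mod_cast hlt
    -- key numeric inequality
    have key : Nat.card {p : (⊤ : Subgroup G) × G // (p.1 : G) * p.2 = p.2 * (p.1 : G)} *
          Nat.card K <
        Nat.card {p : K × G // (p.1 : G) * p.2 = p.2 * (p.1 : G)} * Nat.card G := by
      rw [card_comm_pairs, card_comm_pairs, Finset.sum_mul, Finset.sum_mul]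
      apply Finset.sum_lt_sum
      · intro g _
        have h := card_inf_mul K (Subgroup.centralizer {g})
        have heq : (⊤ : Subgroup G) ⊓ Subgroup.centralizer {g} =
            Subgroup.centralizer {g} := top_inf_eq _
        rw [heq]
        exact h
      · refine ⟨x, Finset.mem_univ x, ?_⟩
        have h1 : K ⊓ Subgroup.centralizer {x} = K := inf_eq_left.2 hKle
        have h2 : (⊤ : Subgroup G) ⊓ Subgroup.centralizer {x} =
            Subgroup.centralizer {x} := top_inf_eq _
        rw [h1, h2, Nat.mul_comm (Nat.card ↥K) (Nat.card G)]
        exact Nat.mul_lt_mul_of_lt_of_le hClt (le_refl _) hKpos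
    -- relCommDeg ⊤ < relCommDeg K
    have hab : relCommDeg (⊤ : Subgroup G) < relCommDeg K := by
      have hTQ : (0:ℚ) < (Nat.card ↥(⊤ : Subgroup G) : ℚ) := by exact_mod_cast Nat.card_pos
      rw [relCommDeg, relCommDeg, div_lt_div_iff₀ (mul_pos hTQ hGQ) (mul_pos hKQ hGQ)]
      have kq : (Nat.card {p : (⊤ : Subgroup G) × G // (p.1 : G) * p.2 = p.2 * (p.1 : G)} : ℚ) *
          (Nat.card K : ℚ) <
          (Nat.card {p : K × G // (p.1 : G) * p.2 = p.2 * (p.1 : G)} : ℚ) * (Nat.card G : ℚ) := by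
        exact_mod_cast key
      have htop : (Nat.card ↥(⊤ : Subgroup G) : ℚ) = (Nat.card G : ℚ) := by
        have h := Subgroup.card_top (G := G)
        exact_mod_cast h
      rw [htop]
      nlinarith [kq, hGQ]
    -- 1 ∈ commDegSet
    have hbot : relCommDeg (⊥ : Subgroup G) = 1 := by
      apply relCommDeg_eq_one_of
      intro h g
      have : (h : G) = 1 := Subgroup.mem_bot.1 h.2
      rw [this, one_mul, mul_one]
    have hfin : (commDegSet G).Finite := by
      have : Finite (Subgroup G) :=
        Finite.of_injective (fun H => (H : Set G)) SetLike.coe_injective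
      exact Set.finite_range (relCommDeg (G := G))
    intro h2
    have hsub : ({relCommDeg (⊤ : Subgroup G), relCommDeg K, (1:ℚ)} : Set ℚ) ⊆ commDegSet G := by
      rintro q (rfl | rfl | rfl)
      · exact ⟨⊤, rfl⟩
      · exact ⟨K, rfl⟩
      · exact ⟨⊥, hbot⟩
    have h3 : ({relCommDeg (⊤ : Subgroup G), relCommDeg K, (1:ℚ)} : Set ℚ).ncard = 3 := by
      rw [Set.ncard_insert_of_notMem, Set.ncard_insert_of_notMem, Set.ncard_singleton]
      · simp only [Set.mem_singleton_iff]
        exact ne_of_lt hb1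
      · simp only [Set.mem_insert_iff, Set.mem_singleton_iff]
        push_neg
        exact ⟨ne_of_lt hab, ne_of_lt (lt_trans hab hb1)⟩
    have := Set.ncard_le_ncard hsub hfin
    omega
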